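/- Let ι be a nonempty finite type, α ∈ [0,1), β > 0, let r : ℝ → ι → ℝ be continuous, and let x : ℝ → ι → ℝ be a trajectory of the single-agent SQL dynamics for (α, β, r). Then for every choice distribution p (p_i ≥ 0 for all i and ∑_i p_i = 1) and every t ≥ 0, the function s ↦ ∑_i p_i · ln x_i(s) is differentiable at t and its derivative satisfies d/dt ∑_i p_i · ln x_i(t) ≥ u^H(p,t) − u^H(x(t),t). -/

import Mathlib

open Filter Real

/-- **Key derivative inequality in the regret proof for single-agent SQL dynamics.**
Along a trajectory `x` of the single-agent smooth Q-learning dynamics with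
parameters `α ∈ [0,1)`, `β > 0` and continuous reward `r`, for any fixed choice
distribution `p` and any `t ≥ 0` the function `s ↦ ∑ i, p i * log (x s i)` is
differentiable at `t` and its derivative is at least
`u^H(p,t) − u^H(x t, t)`, where `u^H(q,t) = β ∑ q_i r_i(t) − α ∑ q_i ln q_i`. -/
theorem sql_kl_derivative_bound {ι : Type*} [Fintype ι] [Nonempty ι]
    (α β : ℝ) (hα₀ : 0 ≤ α) (hα₁ : α < 1) (hβ : 0 < β)
    (r : ℝ → ι → ℝ) (hr : ∀ i, Continuous fun t => r t i)
    (x : ℝ → ι → ℝ) (hxdiff : ∀ i, Differentiable ℝ fun t => x t i)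
    (hxpos : ∀ t ≥ (0 : ℝ), ∀ i, 0 < x t i)
    (hxsum : ∀ t ≥ (0 : ℝ), ∑ i, x t i = 1)
    (hode : ∀ t ≥ (0 : ℝ), ∀ i, deriv (fun s => x s i) t =
      x t i * (β * (r t i - ∑ j, x t j * r t j)
        - α * (Real.log (x t i) - ∑ j, x t j * Real.log (x t j))))
    (p : ι → ℝ) (hp₀ : ∀ i, 0 ≤ p i) (hp₁ : ∑ i, p i = 1)
    (t : ℝ) (ht : 0 ≤ t) :
    DifferentiableAt ℝ (fun s => ∑ i, p i * Real.log (x s i)) t ∧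
    deriv (fun s => ∑ i, p i * Real.log (x s i)) t ≥
      (β * ∑ i, p i * r t i - α * ∑ i, p i * Real.log (p i))
        - (β * ∑ i, x t i * r t i - α * ∑ i, x t i * Real.log (x t i)) := by
  have hx := hxpos t ht
  obtain ⟨R, hR⟩ : ∃ R, R = ∑ j, x t j * r t j := ⟨_, rfl⟩
  obtain ⟨L, hL⟩ : ∃ L, L = ∑ j, x t j * Real.log (x t j) := ⟨_, rfl⟩
  rw [← hR, ← hL]
  have hD : ∀ i, HasDerivAt (fun s => Real.log (x s i))
      (β * (r t i - R) - α * (Real.log (x t i) - L)) t := by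
    intro i
    have h1 : HasDerivAt (fun s => x s i) (deriv (fun s => x s i) t) t :=
      ((hxdiff i) t).hasDerivAt
    have h2 := h1.log (hx i).ne'
    rw [hode t ht i, ← hR, ← hL] at h2
    have heq : x t i * (β * (r t i - R) - α * (Real.log (x t i) - L)) / x t i
        = β * (r t i - R) - α * (Real.log (x t i) - L) := by
      exact mul_div_cancel_left₀ _ (hx i).ne'
    rwa [heq] at h2
  have hF : HasDerivAt (fun s => ∑ i, p i * Real.log (x s i))
      (∑ i, p i * (β * (r t i - R) - α * (Real.log (x t i) - L))) t := by
    apply HasDerivAt.fun_sum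
    intro i _
    exact (hD i).const_mul (p i)
  refine ⟨hF.differentiableAt, ?_⟩
  rw [hF.deriv]
  have expand : ∑ i, p i * (β * (r t i - R) - α * (Real.log (x t i) - L))
      = β * (∑ i, p i * r t i) - β * R * (∑ i, p i)
        - α * (∑ i, p i * Real.log (x t i)) + α * L * (∑ i, p i) := by
    rw [Finset.mul_sum, Finset.mul_sum, Finset.mul_sum, Finset.mul_sum,
      ← Finset.sum_sub_distrib, ← Finset.sum_sub_distrib, ← Finset.sum_add_distrib]
    exact Finset.sum_congr rfl fun i _ => by ring
  rw [expand, hp₁]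
  have gibbs : ∑ i, p i * Real.log (x t i) ≤ ∑ i, p i * Real.log (p i) := by
    have h : ∀ i ∈ Finset.univ, p i * Real.log (x t i) - p i * Real.log (p i)
        ≤ x t i - p i := by
      intro i _
      rcases eq_or_lt_of_le (hp₀ i) with h0 | h0
      · simp [← h0, (hx i).le]
      · have hlog := Real.log_le_sub_one_of_pos (div_pos (hx i) h0)
        rw [Real.log_div (hx i).ne' h0.ne'] at hlog
        have := mul_le_mul_of_nonneg_left hlog h0.le
        have hcancel : p i * (x t i / p i - 1) = x t i - p i := by
          field_simp
        nlinarith [this, hcancel]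
    have hsum := Finset.sum_le_sum h
    rw [Finset.sum_sub_distrib] at hsum
    have : ∑ i, (x t i - p i) = 0 := by
      rw [Finset.sum_sub_distrib, hxsum t ht, hp₁]; ring
    linarith
  have hα : α * (∑ i, p i * Real.log (p i) - ∑ i, p i * Real.log (x t i)) ≥ 0 :=
    mul_nonneg hα₀ (by linarith)
  nlinarith [hα]
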